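/- The vector of diagonal entries of a Hermitian matrix is majorized by the vector of its eigenvalues (Schur–Horn, majorization direction). -/

import Mathlib

open Finset

/-- Majorization `o ≺ θ` of vectors in `ℝ^K`: every partial sum of entries of `o`
is dominated by a sum of equally many entries of `θ` (equivalently, the partial sums
of the decreasing rearrangement of `o` are bounded by those of `θ`),
and the total sums agree. -/
def Majorizes {K : ℕ} (o θ : Fin K → ℝ) : Prop :=
  (∀ s : Finset (Fin K), ∃ t : Finset (Fin K), t.card = s.card ∧
      ∑ i ∈ s, o i ≤ ∑ i ∈ t, θ i) ∧
    ∑ i, o i = ∑ i, θ i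

/-- If `0 ≤ c j ≤ 1` and `∑ c = m`, then `∑ c j * θ j` is at most the sum of some
`m` entries of `θ`. -/
lemma key_lemma {K : ℕ} (θ c : Fin K → ℝ) (h0 : ∀ j, 0 ≤ c j) (h1 : ∀ j, c j ≤ 1)
    (m : ℕ) (hm : m ≤ K) (hsum : ∑ j, c j = m) :
    ∃ t : Finset (Fin K), t.card = m ∧ ∑ j, c j * θ j ≤ ∑ j ∈ t, θ j := by
  -- choose t maximizing the sum among card-m subsets
  have hne : (Finset.univ.powersetCard m : Finset (Finset (Fin K))).Nonempty := by
    apply Finset.powersetCard_nonempty.mpr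
    simpa using hm
  obtain ⟨t, htmem, htmax⟩ := Finset.exists_max_image _ (fun t => ∑ j ∈ t, θ j) hne
  rw [Finset.mem_powersetCard_univ] at htmem
  refine ⟨t, htmem, ?_⟩
  rcases Nat.eq_zero_or_pos m with hm0 | hmpos
  · subst hm0
    have hc0 : ∀ j ∈ Finset.univ, c j = 0 := by
      rw [← Finset.sum_eq_zero_iff_of_nonneg (fun j _ => h0 j)]
      simpa using hsum
    have ht0 : t = ∅ := Finset.card_eq_zero.mp htmem
    simp only [ht0, Finset.sum_empty]
    rw [Finset.sum_eq_zero fun j _ => by rw [hc0 j (Finset.mem_univ j), zero_mul]]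
  · have htne : t.Nonempty := Finset.card_pos.mp (htmem ▸ hmpos)
    set μ := t.inf' htne θ with hμ
    -- swap property: θ j ≤ μ for j ∉ t
    have hswap : ∀ j ∉ t, θ j ≤ μ := by
      intro j hj
      apply Finset.le_inf'
      intro k hk
      have hcard : (insert j (t.erase k)).card = m := by
        rw [Finset.card_insert_of_notMem (fun h => hj (Finset.mem_of_mem_erase h)),
          Finset.card_erase_of_mem hk, htmem]
        omega
      have := htmax (insert j (t.erase k)) (Finset.mem_powersetCard_univ.mpr hcard)
      rw [Finset.sum_insert (fun h => hj (Finset.mem_of_mem_erase h)),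
        Finset.sum_erase_eq_sub hk] at this
      linarith
    have hμle : ∀ j ∈ t, μ ≤ θ j := fun j hj => Finset.inf'_le θ hj
    -- split the sum
    have hsplit : ∑ j, c j * θ j = ∑ j ∈ t, c j * θ j + ∑ j ∈ tᶜ, c j * θ j :=
      (Finset.sum_add_sum_compl t _).symm
    have hb1 : ∀ j ∈ t, c j * θ j - θ j ≤ (c j - 1) * μ := by
      intro j hj
      have : (c j - 1) * θ j ≤ (c j - 1) * μ :=
        mul_le_mul_of_nonpos_left (hμle j hj) (by linarith [h1 j])
      nlinarith
    have hb2 : ∀ j ∈ tᶜ, c j * θ j ≤ c j * μ := by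
      intro j hj
      exact mul_le_mul_of_nonneg_left (hswap j (Finset.mem_compl.mp hj)) (h0 j)
    have h1' : ∑ j ∈ t, (c j * θ j - θ j) ≤ ∑ j ∈ t, (c j - 1) * μ :=
      Finset.sum_le_sum hb1
    have h2' : ∑ j ∈ tᶜ, c j * θ j ≤ ∑ j ∈ tᶜ, c j * μ := Finset.sum_le_sum hb2
    have hall : ∑ j ∈ t, (c j - 1) * μ + ∑ j ∈ tᶜ, c j * μ = 0 := by
      rw [← Finset.sum_mul, ← Finset.sum_mul]
      have h5 : (∑ j ∈ t, c j) + ∑ j ∈ tᶜ, c j = (m : ℝ) := by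
        rw [Finset.sum_add_sum_compl t c]; exact hsum
      have h6 : ∑ j ∈ t, (c j - 1) = (∑ j ∈ t, c j) - m := by
        rw [Finset.sum_sub_distrib]; simp [htmem]
      have h7 : ∑ j ∈ tᶜ, c j = (m : ℝ) - ∑ j ∈ t, c j := by linarith
      rw [h6, h7]; ring
    have hsub : ∑ j ∈ t, (c j * θ j - θ j) = ∑ j ∈ t, c j * θ j - ∑ j ∈ t, θ j :=
      Finset.sum_sub_distrib _ _
    linarith [hsplit ▸ (by linarith : ∑ j ∈ t, c j * θ j + ∑ j ∈ tᶜ, c j * θ j ≤ ∑ j ∈ t, θ j)]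

/-- Schur–Horn (majorization direction): the vector of diagonal entries of a
Hermitian matrix is majorized by the vector of its eigenvalues. -/
theorem stmt4 (K : ℕ) (O : Matrix (Fin K) (Fin K) ℂ) (hO : O.IsHermitian) :
    Majorizes (fun i => (O i i).re) hO.eigenvalues := by
  set U : Matrix (Fin K) (Fin K) ℂ := (hO.eigenvectorUnitary : Matrix (Fin K) (Fin K) ℂ) with hU
  set θ := hO.eigenvalues
  set w : Fin K → Fin K → ℝ := fun i j => Complex.normSq (U i j) with hw
  have hw0 : ∀ i j, 0 ≤ w i j := fun i j => Complex.normSq_nonneg _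
  -- diagonal entries
  have hdiag : ∀ i, (O i i).re = ∑ j, w i j * θ j := by
    intro i
    conv_lhs => rw [hO.spectral_theorem, Unitary.conjStarAlgAut_apply]
    rw [Matrix.mul_apply]
    rw [Complex.re_sum]
    apply Finset.sum_congr rfl
    intro j _
    rw [Matrix.mul_apply, Finset.sum_mul, Complex.re_sum]
    rw [Finset.sum_eq_single j (by intro k _ hk; simp [Matrix.diagonal_apply_ne _ hk])
      (by simp)]
    simp only [Matrix.diagonal_apply_eq, Function.comp_apply, Matrix.star_apply, ← hU]
    have : U i j * ((θ j : ℝ) : ℂ) * star (U i j) = ((w i j * θ j : ℝ) : ℂ) := by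
      rw [Complex.star_def, mul_comm (U i j) (((θ j : ℝ) : ℂ)), mul_assoc, Complex.mul_conj]
      push_cast
      simp only [hw]
      ring
    show (U i j * ((θ j : ℝ) : ℂ) * star (U i j)).re = w i j * θ j
    rw [this, Complex.ofReal_re]
  -- row sums
  have hrow : ∀ i, ∑ j, w i j = 1 := by
    intro i
    have hUU : U * star U = 1 := Matrix.mem_unitaryGroup_iff.mp hO.eigenvectorUnitary.2
    have := congrFun (congrFun hUU i) i
    rw [Matrix.mul_apply] at this
    have hre := congrArg Complex.re this
    rw [Complex.re_sum] at hre
    simp only [Matrix.star_apply, Matrix.one_apply_eq, Complex.one_re] at hre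
    rw [← hre]
    apply Finset.sum_congr rfl
    intro j _
    rw [Complex.star_def, Complex.mul_conj, Complex.ofReal_re]
  -- column sums
  have hcol : ∀ j, ∑ i, w i j = 1 := by
    intro j
    have hUU : star U * U = 1 := Matrix.mem_unitaryGroup_iff'.mp hO.eigenvectorUnitary.2
    have := congrFun (congrFun hUU j) j
    rw [Matrix.mul_apply] at this
    have hre := congrArg Complex.re this
    rw [Complex.re_sum] at hre
    simp only [Matrix.star_apply, Matrix.one_apply_eq, Complex.one_re] at hre
    rw [← hre]
    apply Finset.sum_congr rfl
    intro i _
    rw [Complex.star_def, mul_comm, Complex.mul_conj, Complex.ofReal_re]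
  constructor
  · intro s
    set c : Fin K → ℝ := fun j => ∑ i ∈ s, w i j with hc
    have hc0 : ∀ j, 0 ≤ c j := fun j => Finset.sum_nonneg fun i _ => hw0 i j
    have hc1 : ∀ j, c j ≤ 1 := by
      intro j
      calc c j ≤ ∑ i, w i j :=
            Finset.sum_le_sum_of_subset_of_nonneg (Finset.subset_univ s)
              fun i _ _ => hw0 i j
        _ = 1 := hcol j
    have hcsum : ∑ j, c j = s.card := by
      rw [Finset.sum_comm]
      rw [Finset.sum_congr rfl fun i _ => hrow i]
      simp
    have hos : ∑ i ∈ s, (O i i).re = ∑ j, c j * θ j := by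
      rw [Finset.sum_congr rfl fun i _ => hdiag i, Finset.sum_comm]
      apply Finset.sum_congr rfl
      intro j _
      rw [hc, Finset.sum_mul]
    obtain ⟨t, htc, hts⟩ := key_lemma θ c hc0 hc1 s.card (by
      simpa using Finset.card_le_card (Finset.subset_univ s)) hcsum
    exact ⟨t, htc, by rw [hos]; exact hts⟩
  · show ∑ i, (O i i).re = ∑ i, θ i
    calc ∑ i, (O i i).re = ∑ i, ∑ j, w i j * θ j :=
          Finset.sum_congr rfl fun i _ => hdiag i
      _ = ∑ j, (∑ i, w i j) * θ j := by
          rw [Finset.sum_comm]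
          exact Finset.sum_congr rfl fun j _ => (Finset.sum_mul ..).symm
      _ = ∑ j, θ j := by simp only [hcol, one_mul]
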